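/- In a connected convex bipartite graph G(X,Y) convex on X, consider the two candidate connecting paths in Algorithm 2 between consecutive terminals: P_1 starting from p = r(w(z)) and P_2 starting from q = z_j, both ending at the next terminal z_{j+1}, producing vertex sets S_1 and S_2 respectively. Then ||S_1| − |S_2|| ≤ 1. -/

import Mathlib

/-- `S` is a Steiner set for terminal set `R` in `G`: the subgraph induced on `R ∪ S`
is connected. -/
def IsSteinerSet {V : Type*} (G : SimpleGraph V) (R S : Set V) : Prop :=
  (G.induce (R ∪ S)).Connected

/-- `S` is a minimum Steiner set for terminal set `R` in `G`. -/
def IsMinSteinerSet {V : Type*} (G : SimpleGraph V) (R S : Set V) : Prop :=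
  IsSteinerSet G R S ∧ ∀ S' : Set V, IsSteinerSet G R S' → S.ncard ≤ S'.ncard

/-- The bipartite graph on `α ⊕ β` determined by the cross-adjacency relation `A`. -/
def biGraph {α β : Type*} (A : α → β → Prop) : SimpleGraph (α ⊕ β) where
  Adj u v := (∃ a b, u = .inl a ∧ v = .inr b ∧ A a b) ∨ (∃ a b, u = .inr b ∧ v = .inl a ∧ A a b)
  symm := by
    refine ⟨?_⟩
    rintro u v (⟨a,b,h1,h2,h3⟩|⟨a,b,h1,h2,h3⟩)
    · exact Or.inr ⟨a,b,h2,h1,h3⟩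
    · exact Or.inl ⟨a,b,h2,h1,h3⟩
  loopless := by refine ⟨?_⟩; rintro (a|b) (⟨x,y,h1,h2,_⟩|⟨x,y,h1,h2,_⟩) <;> simp_all

/-- Cardinality of a disjoint union of an `inl`-image and an `inr`-image. -/
lemma ncard_aux {m : ℕ} {Y : Type*} (f : ℕ → Fin m) (g : ℕ → Y)
    (a b : Set ℕ) (haf : a.Finite) (hbf : b.Finite)
    (hf : Set.InjOn f a) (hg : Set.InjOn g b) :
    ({x : Fin m ⊕ Y | ∃ i ∈ a, x = Sum.inl (f i)} ∪
      {x | ∃ i ∈ b, x = Sum.inr (g i)}).ncard = a.ncard + b.ncard := by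
  have h1 : {x : Fin m ⊕ Y | ∃ i ∈ a, x = Sum.inl (f i)} = Sum.inl '' (f '' a) := by
    ext x
    constructor
    · rintro ⟨i, hi, rfl⟩; exact ⟨f i, ⟨i, hi, rfl⟩, rfl⟩
    · rintro ⟨y, ⟨i, hi, rfl⟩, rfl⟩; exact ⟨i, hi, rfl⟩
  have h2 : {x : Fin m ⊕ Y | ∃ i ∈ b, x = Sum.inr (g i)} = Sum.inr '' (g '' b) := by
    ext x
    constructor
    · rintro ⟨i, hi, rfl⟩; exact ⟨g i, ⟨i, hi, rfl⟩, rfl⟩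
    · rintro ⟨y, ⟨i, hi, rfl⟩, rfl⟩; exact ⟨i, hi, rfl⟩
  have hd : Disjoint (Sum.inl '' (f '' a)) (Sum.inr '' (g '' b) : Set (Fin m ⊕ Y)) := by
    rw [Set.disjoint_left]
    rintro x ⟨y, _, rfl⟩ ⟨z, _, h⟩
    exact Sum.inl_ne_inr h.symm
  rw [h1, h2, Set.ncard_union_eq hd ((haf.image f).image _) ((hbf.image g).image _),
    Set.ncard_image_of_injective _ Sum.inl_injective,
    Set.ncard_image_of_injective _ Sum.inr_injective,
    Set.ncard_image_of_injOn hf, Set.ncard_image_of_injOn hg]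

/-- In Algorithm 2 for `R ⊂ X` in a connected convex bipartite graph, the two candidate
connecting vertex sets `S₁` (path from `p = r (w z)`) and `S₂` (path from `q = z_j`),
both reaching the next terminal `z'`, differ in cardinality by at most one. -/
theorem stmt19 {m : ℕ} {Y : Type*} (A : Fin m → Y → Prop)
    (hconn : (biGraph A).Connected)
    (hconv : ∀ (y : Y) (a b c : Fin m), a ≤ b → b ≤ c → A a y → A c y → A b y)
    (r : Y → Fin m) (hr : ∀ y : Y, A (r y) y ∧ ∀ x : Fin m, A x y → x ≤ r y)
    (w : Fin m → Y) (hw : ∀ x : Fin m, A x (w x) ∧ ∀ y : Y, A x y → r y ≤ r (w x))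
    (z zj z' : Fin m) (hzj : A zj (w z)) (hzjz' : zj < z') (hz' : ¬ A z' (w z))
    (u v : ℕ → Fin m)
    (hu0 : u 0 = r (w z)) (hu : ∀ i, u (i + 1) = r (w (u i)))
    (hv0 : v 0 = zj) (hv : ∀ i, v (i + 1) = r (w (v i)))
    (s t : ℕ)
    (hs : A z' (w (u s)) ∧ ∀ i < s, ¬ A z' (w (u i)))
    (ht : A z' (w (v t)) ∧ ∀ i < t, ¬ A z' (w (v i))) :
    ({x : Fin m ⊕ Y | ∃ i ≤ s, x = Sum.inl (u i)} ∪
        {x | ∃ i < s, x = Sum.inr (w (u i))}).ncard ≤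
      ({x : Fin m ⊕ Y | ∃ i, 1 ≤ i ∧ i ≤ t ∧ x = Sum.inl (v i)} ∪
        {x | ∃ i < t, x = Sum.inr (w (v i))}).ncard + 1 ∧
    ({x : Fin m ⊕ Y | ∃ i, 1 ≤ i ∧ i ≤ t ∧ x = Sum.inl (v i)} ∪
        {x | ∃ i < t, x = Sum.inr (w (v i))}).ncard ≤
      ({x : Fin m ⊕ Y | ∃ i ≤ s, x = Sum.inl (u i)} ∪
        {x | ∃ i < s, x = Sum.inr (w (u i))}).ncard + 1 := by
  classical
  -- basic facts about F x := r (w x)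
  have le_F : ∀ x : Fin m, x ≤ r (w x) := fun x => (hr (w x)).2 x (hw x).1
  have mono : ∀ x x' : Fin m, x ≤ x' → x' ≤ r (w x) → r (w x) ≤ r (w x') := by
    intro x x' h1 h2
    have hadj : A x' (w x) := hconv (w x) x x' (r (w x)) h1 h2 (hw x).1 (hr (w x)).1
    exact (hw x').2 (w x) hadj
  have adj_between : ∀ x : Fin m, x ≤ z' → z' ≤ r (w x) → A z' (w x) := by
    intro x h1 h2
    exact hconv (w x) x z' (r (w x)) h1 h2 (hw x).1 (hr (w x)).1
  -- interleaving: u i ≤ v (i+1) ≤ u (i+1)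
  have inter : ∀ i, u i ≤ v (i + 1) ∧ v (i + 1) ≤ u (i + 1) := by
    intro i
    induction i with
    | zero =>
      have h1 : u 0 ≤ v 1 := by
        rw [hu0, hv 0, hv0]; exact (hw zj).2 (w z) hzj
      have h0 : v 0 ≤ u 0 := by
        rw [hv0, hu0]; exact (hr (w z)).2 zj hzj
      have h2 : v 1 ≤ u 1 := by
        rw [hv 0, hu 0]
        exact mono (v 0) (u 0) h0 (by rw [← hv 0]; exact h1)
      exact ⟨h1, h2⟩
    | succ k ih =>
      have h1 : u (k + 1) ≤ v (k + 2) := by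
        rw [hu k, hv (k + 1)]
        exact mono (u k) (v (k + 1)) ih.1 (by rw [← hu k]; exact ih.2)
      have h2 : v (k + 2) ≤ u (k + 2) := by
        rw [hv (k + 1), hu (k + 1)]
        exact mono (v (k + 1)) (u (k + 1)) ih.2 (by rw [← hv (k + 1)]; exact h1)
      exact ⟨h1, h2⟩
  -- strict increase up to the termination index (generic)
  have gen : ∀ (x : ℕ → Fin m) (n : ℕ), (∀ i, x (i + 1) = r (w (x i))) →
      A z' (w (x n)) → (∀ i < n, ¬ A z' (w (x i))) →
      ∀ i j, i < j → j ≤ n → x i < x j := by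
    intro x n hx hterm hmin
    have hle : ∀ i, x i ≤ x (i + 1) := by
      intro i; rw [hx i]; exact le_F (x i)
    have hstall : ∀ i, x (i + 1) = x i → ∀ k, x (i + k) = x i := by
      intro i hi k
      induction k with
      | zero => rfl
      | succ l ih =>
        have : x (i + l + 1) = r (w (x (i + l))) := hx (i + l)
        rw [show i + (l + 1) = i + l + 1 from rfl, this, ih, ← hx i, hi]
    have hstrict : ∀ i < n, x i < x (i + 1) := by
      intro i hi
      rcases lt_or_eq_of_le (hle i) with h | h
      · exact h
      · exfalso
        have hxs : x n = x i := by
          have := hstall i h.symm (n - i)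
          rwa [Nat.add_sub_cancel' hi.le] at this
        exact hmin i hi (hxs ▸ hterm)
    intro i j hij hjn
    induction j with
    | zero => omega
    | succ k ih =>
      rcases Nat.lt_succ_iff_lt_or_eq.mp hij with h | h
      · exact (ih h (by omega)).trans (hstrict k (by omega))
      · exact h ▸ hstrict k (by omega)
  have ugen := gen u s hu hs.1 hs.2
  have vgen := gen v t hv ht.1 ht.2
  -- u 0 < z'
  have hu0lt : u 0 < z' := by
    by_contra h
    push_neg at h
    have : z' ≤ r (w z) := hu0 ▸ h
    exact hz' (hconv (w z) zj z' (r (w z)) hzjz'.le this hzj (hr (w z)).1)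
  -- t ≤ s + 1
  have hts : t ≤ s + 1 := by
    have hbound : z' ≤ r (w (v (s + 1))) := by
      have h1 : z' ≤ u (s + 1) := by
        rw [hu s]; exact (hr (w (u s))).2 z' hs.1
      have h2 : u (s + 1) ≤ v (s + 2) := (inter (s + 1)).1
      rw [hv (s + 1)] at h2
      exact h1.trans h2
    have hP : ∃ j, z' ≤ r (w (v j)) := ⟨s + 1, hbound⟩
    have hjspec : z' ≤ r (w (v (Nat.find hP))) := Nat.find_spec hP
    have hjle : Nat.find hP ≤ s + 1 := Nat.find_min' hP hbound
    have hvj : v (Nat.find hP) ≤ z' := by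
      rcases Nat.eq_zero_or_pos (Nat.find hP) with h0 | hpos
      · rw [h0, hv0]; exact hzjz'.le
      · obtain ⟨k, hk⟩ := Nat.exists_eq_succ_of_ne_zero hpos.ne'
        have hkmin : ¬ z' ≤ r (w (v k)) := Nat.find_min hP (by omega)
        push_neg at hkmin
        rw [hk, hv k]; exact hkmin.le
    have hadj : A z' (w (v (Nat.find hP))) := adj_between _ hvj hjspec
    by_contra h
    push_neg at h
    exact ht.2 (Nat.find hP) (by omega) hadj
  -- s ≤ t
  have hst : s ≤ t := by
    have hbound : z' ≤ r (w (u t)) := by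
      have h1 : z' ≤ r (w (v t)) := (hr (w (v t))).2 z' ht.1
      have h2 : v (t + 1) ≤ u (t + 1) := (inter t).2
      rw [← hv t] at h1
      rw [← hu t]
      exact h1.trans h2
    have hP : ∃ j, z' ≤ r (w (u j)) := ⟨t, hbound⟩
    have hjspec : z' ≤ r (w (u (Nat.find hP))) := Nat.find_spec hP
    have hjle : Nat.find hP ≤ t := Nat.find_min' hP hbound
    have huj : u (Nat.find hP) ≤ z' := by
      rcases Nat.eq_zero_or_pos (Nat.find hP) with h0 | hpos
      · rw [h0]; exact hu0lt.le
      · obtain ⟨k, hk⟩ := Nat.exists_eq_succ_of_ne_zero hpos.ne'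
        have hkmin : ¬ z' ≤ r (w (u k)) := Nat.find_min hP (by omega)
        push_neg at hkmin
        rw [hk, hu k]; exact hkmin.le
    have hadj : A z' (w (u (Nat.find hP))) := adj_between _ huj hjspec
    by_contra h
    push_neg at h
    exact hs.2 (Nat.find hP) (by omega) hadj
  -- injectivity of the pieces
  have uInj : Set.InjOn u (Set.Iic s) := by
    intro i hi j hj hij
    rcases lt_trichotomy i j with h | h | h
    · exact absurd hij (ugen i j h hj).ne
    · exact h
    · exact absurd hij.symm (ugen j i h hi).ne
  have vInj : Set.InjOn v (Set.Icc 1 t) := by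
    intro i hi j hj hij
    rcases lt_trichotomy i j with h | h | h
    · exact absurd hij (vgen i j h hj.2).ne
    · exact h
    · exact absurd hij.symm (vgen j i h hi.2).ne
  have wuInj : Set.InjOn (fun i => w (u i)) (Set.Iio s) := by
    intro i hi j hj hij
    simp only [Set.mem_Iio] at hi hj
    have h1 : u (i + 1) = u (j + 1) := by rw [hu i, hu j]; exact congrArg r hij
    have h2 := uInj (Set.mem_Iic.mpr (by omega)) (Set.mem_Iic.mpr (by omega)) h1
    omega
  have wvInj : Set.InjOn (fun i => w (v i)) (Set.Iio t) := by
    intro i hi j hj hij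
    simp only [Set.mem_Iio] at hi hj
    have h1 : v (i + 1) = v (j + 1) := by rw [hv i, hv j]; exact congrArg r hij
    have h2 := vInj (Set.mem_Icc.mpr (by omega)) (Set.mem_Icc.mpr (by omega)) h1
    omega
  -- compute cardinalities
  have c1 : ({x : Fin m ⊕ Y | ∃ i ≤ s, x = Sum.inl (u i)} ∪
      {x | ∃ i < s, x = Sum.inr (w (u i))}).ncard = (s + 1) + s := by
    have e1 : {x : Fin m ⊕ Y | ∃ i ≤ s, x = Sum.inl (u i)} =
        {x | ∃ i ∈ Set.Iic s, x = Sum.inl (u i)} := rfl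
    have e2 : {x : Fin m ⊕ Y | ∃ i < s, x = Sum.inr (w (u i))} =
        {x | ∃ i ∈ Set.Iio s, x = Sum.inr (w (u i))} := rfl
    rw [e1, e2, ncard_aux u (fun i => w (u i)) (Set.Iic s) (Set.Iio s)
      (Set.finite_Iic s) (Set.finite_Iio s) uInj wuInj]
    rw [← Finset.coe_Iic, ← Finset.coe_Iio, Set.ncard_coe_finset, Set.ncard_coe_finset,
      Nat.card_Iic, Nat.card_Iio]
  have c2 : ({x : Fin m ⊕ Y | ∃ i, 1 ≤ i ∧ i ≤ t ∧ x = Sum.inl (v i)} ∪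
      {x | ∃ i < t, x = Sum.inr (w (v i))}).ncard = t + t := by
    have e1 : {x : Fin m ⊕ Y | ∃ i, 1 ≤ i ∧ i ≤ t ∧ x = Sum.inl (v i)} =
        {x | ∃ i ∈ Set.Icc 1 t, x = Sum.inl (v i)} := by
      ext x; simp [Set.mem_Icc, and_assoc]
    have e2 : {x : Fin m ⊕ Y | ∃ i < t, x = Sum.inr (w (v i))} =
        {x | ∃ i ∈ Set.Iio t, x = Sum.inr (w (v i))} := rfl
    rw [e1, e2, ncard_aux v (fun i => w (v i)) (Set.Icc 1 t) (Set.Iio t)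
      (Set.finite_Icc 1 t) (Set.finite_Iio t) vInj wvInj]
    rw [← Finset.coe_Icc, ← Finset.coe_Iio, Set.ncard_coe_finset, Set.ncard_coe_finset,
      Nat.card_Icc, Nat.card_Iio]
    omega
  rw [c1, c2]
  omega
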